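/- Let L be a combinatorial Laplacian obtained by single-level Laplacian-consistent coarsening with partition 𝒫 = {S₁,...,S_n} of {1,...,N}, with coarsening matrix P and Π = P^+P. Let U_k ∈ ℝ^{N×k} contain orthonormal eigenvectors of L. Then the n-means cost of the partition on the rows of U_k equals ‖U_k − ΠU_k‖²_F, i.e., Σ_{z=1}^n Σ_{i∈S_z} ‖U_k(i,:) − mean_{j∈S_z} U_k(j,:)‖² = ‖(I − Π)U_k‖²_F. -/
import Mathlib


open Matrix Finset

/-- Laplacian-consistent coarsening matrix of a partition given by `φ`. -/
noncomputable def cP {N n : ℕ} (φ : Fin N → Fin n) : Matrix (Fin n) (Fin N) ℝ :=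
  Matrix.of fun r i =>
    if φ i = r then ((Finset.univ.filter fun j => φ j = r).card : ℝ)⁻¹ else 0

/-- Its pseudoinverse: `P⁺ i r = 1` if `φ i = r`, else `0`. -/
def cPp {N n : ℕ} (φ : Fin N → Fin n) : Matrix (Fin N) (Fin n) ℝ :=
  Matrix.of fun i r => if φ i = r then (1 : ℝ) else 0

/-- The `n`-means cost of assigning the rows of `U` to clusters via `ψ`:
each point is compared to the centroid of its cluster. -/
noncomputable def kcost {N n k : ℕ} (U : Matrix (Fin N) (Fin k) ℝ)
    (ψ : Fin N → Fin n) : ℝ :=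
  ∑ r : Fin n, ∑ i ∈ Finset.univ.filter fun i => ψ i = r, ∑ a,
    (U i a - (∑ j ∈ Finset.univ.filter fun j => ψ j = r, U j a) /
      ((Finset.univ.filter fun j => ψ j = r).card : ℝ)) ^ 2

/-- The `n`-means cost of the coarsening partition on the rows of `U_k` equals
`‖U_k − Π U_k‖²_F` with `Π = P⁺P`. -/
theorem kmeans_cost_eq_frobenius {N n k : ℕ}
    (L : Matrix (Fin N) (Fin N) ℝ) (hL : Lᵀ = L)
    (φ : Fin N → Fin n) (hφ : Function.Surjective φ)
    (U : Matrix (Fin N) (Fin k) ℝ)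
    (horth : Uᵀ * U = 1)
    (heig : ∀ a : Fin k, ∃ μ : ℝ, L *ᵥ (fun i => U i a) = μ • (fun i => U i a)) :
    kcost U φ = ∑ i, ∑ a, ((U - (cPp φ * cP φ) * U) i a) ^ 2 := by
  have hPi : ∀ i a, ((cPp φ * cP φ) * U) i a =
      (∑ j ∈ Finset.univ.filter fun j => φ j = φ i, U j a) /
        ((Finset.univ.filter fun j => φ j = φ i).card : ℝ) := by
    intro i a
    have hPP : ∀ j, (cPp φ * cP φ) i j =
        if φ j = φ i then ((Finset.univ.filter fun m => φ m = φ i).card : ℝ)⁻¹ else 0 := by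
      intro j
      simp only [Matrix.mul_apply, cPp, cP, Matrix.of_apply]
      rw [Finset.sum_eq_single (φ i)]
      · simp
      · intro b _ hb; simp [Ne.symm hb]
      · simp
    simp only [Matrix.mul_apply, hPP, ite_mul, zero_mul, Finset.sum_ite,
      Finset.sum_const_zero, add_zero, div_eq_mul_inv]
    rw [← Finset.mul_sum, mul_comm]
  have key : ∀ i, ∑ a, ((U - (cPp φ * cP φ) * U) i a) ^ 2 =
      ∑ a, (U i a - (∑ j ∈ Finset.univ.filter fun j => φ j = φ i, U j a) /
        ((Finset.univ.filter fun j => φ j = φ i).card : ℝ)) ^ 2 := by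
    intro i
    refine Finset.sum_congr rfl fun a _ => ?_
    rw [Matrix.sub_apply, hPi]
  rw [show (∑ i, ∑ a, ((U - (cPp φ * cP φ) * U) i a) ^ 2) =
      ∑ i, ∑ a, (U i a - (∑ j ∈ Finset.univ.filter fun j => φ j = φ i, U j a) /
        ((Finset.univ.filter fun j => φ j = φ i).card : ℝ)) ^ 2 from
    Finset.sum_congr rfl fun i _ => key i]
  rw [kcost, ← Finset.sum_fiberwise (g := φ)]
  refine Finset.sum_congr rfl fun r _ => Finset.sum_congr rfl fun i hi => ?_
  rw [Finset.mem_filter] at hi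
  rw [hi.2]
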